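/- arXiv:1605.03357 — 2 statements merged into one kernel-verified Lean document; each statement's English description precedes it below -/
import Mathlib

section
/- Let N ≥ 3, let V(x) = ((N+2)/(N-2)) · (N(N-2)/(N(N-2)+|x|²))², and let η*(x) = |x| / (1 + |x|²/(N(N-2)))^(N/2). Then η* satisfies the eigenvalue equation -Δη*(x) - V(x)η*(x) = -(N-1) · η*(x)/|x|² for all x ∈ ℝ^N \ {0}. -/
open Real

noncomputable def auxF (c p t : ℝ) : ℝ := Real.sqrt t / (1 + t / c) ^ p

noncomputable def auxF1 (c p t : ℝ) : ℝ :=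
  (c + t * (1 - 2 * p)) / (2 * Real.sqrt t * c * ((1 + t / c) ^ p * (1 + t / c)))

noncomputable def auxF2 (c p t : ℝ) : ℝ :=
  (-(c + t) ^ 2 - 4 * p * t * (c + t) + 2 * p * (2 * p + 2) * t ^ 2) /
    (4 * Real.sqrt t ^ 3 * c ^ 2 * ((1 + t / c) ^ p * (1 + t / c) ^ 2))

lemma auxF_hasDeriv {c p t : ℝ} (hc : 0 < c) (ht : 0 < t) :
    HasDerivAt (auxF c p) (auxF1 c p t) t := by
  have hu : (0:ℝ) < 1 + t / c := by positivity
  have hU : HasDerivAt (fun t : ℝ => 1 + t / c) (1 / c) t :=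
    ((hasDerivAt_id t).div_const c).const_add 1
  have hUp : HasDerivAt (fun t : ℝ => (1 + t / c) ^ p)
      (1 / c * p * (1 + t / c) ^ (p - 1)) t := hU.rpow_const (Or.inl hu.ne')
  have hs : HasDerivAt Real.sqrt (1 / (2 * Real.sqrt t)) t := Real.hasDerivAt_sqrt ht.ne'
  have h := hs.div hUp (ne_of_gt (Real.rpow_pos_of_pos hu p))
  convert (show HasDerivAt (auxF c p) _ t from h) using 1
  unfold auxF1
  rw [Real.rpow_sub hu p 1, Real.rpow_one]
  have hA : (0:ℝ) < (1 + t / c) ^ p := Real.rpow_pos_of_pos hu p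
  set A := (1 + t / c) ^ p with hAdef
  have hst : Real.sqrt t ^ 2 = t := Real.sq_sqrt ht.le
  set s := Real.sqrt t with hsdef
  have hspos : 0 < s := Real.sqrt_pos.mpr ht
  rw [← hst]
  have hu' : (0:ℝ) < 1 + s ^ 2 / c := by rw [hst]; exact hu
  field_simp
  ring

lemma auxF1_hasDeriv {c p t : ℝ} (hc : 0 < c) (ht : 0 < t) :
    HasDerivAt (auxF1 c p) (auxF2 c p t) t := by
  have hu : (0:ℝ) < 1 + t / c := by positivity
  have hU : HasDerivAt (fun t : ℝ => 1 + t / c) (1 / c) t :=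
    ((hasDerivAt_id t).div_const c).const_add 1
  have hUp : HasDerivAt (fun t : ℝ => (1 + t / c) ^ p)
      (1 / c * p * (1 + t / c) ^ (p - 1)) t := hU.rpow_const (Or.inl hu.ne')
  have hs : HasDerivAt Real.sqrt (1 / (2 * Real.sqrt t)) t := Real.hasDerivAt_sqrt ht.ne'
  have hnum : HasDerivAt (fun t : ℝ => c + t * (1 - 2 * p)) (1 - 2 * p) t := by
    simpa using ((hasDerivAt_id t).mul_const (1 - 2 * p)).const_add c
  have ha : HasDerivAt (fun t : ℝ => 2 * Real.sqrt t * c)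
      (2 * (1 / (2 * Real.sqrt t)) * c) t := (hs.const_mul 2).mul_const c
  have hb : HasDerivAt (fun t : ℝ => (1 + t / c) ^ p * (1 + t / c))
      (1 / c * p * (1 + t / c) ^ (p - 1) * (1 + t / c) + (1 + t / c) ^ p * (1 / c)) t :=
    hUp.mul hU
  have hden := ha.mul hb
  have hA : (0:ℝ) < (1 + t / c) ^ p := Real.rpow_pos_of_pos hu p
  have hspos : 0 < Real.sqrt t := Real.sqrt_pos.mpr ht
  have hdnz : 2 * Real.sqrt t * c * ((1 + t / c) ^ p * (1 + t / c)) ≠ 0 := by positivity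
  have h := hnum.div hden hdnz
  simp only [Pi.mul_apply] at h
  convert (show HasDerivAt (auxF1 c p) _ t from h) using 1
  unfold auxF2
  rw [Real.rpow_sub hu p 1, Real.rpow_one]
  set A := (1 + t / c) ^ p with hAdef
  have hst : Real.sqrt t ^ 2 = t := Real.sq_sqrt ht.le
  set s := Real.sqrt t with hsdef
  rw [← hst]
  have hu' : (0:ℝ) < 1 + s ^ 2 / c := by rw [hst]; exact hu
  field_simp
  ring

lemma aux_identity {n t : ℝ} (hn : 3 ≤ n) (ht : 0 < t) :
    -(4 * t * auxF2 (n * (n - 2)) (n / 2) t + 2 * n * auxF1 (n * (n - 2)) (n / 2) t)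
      - ((n + 2) / (n - 2)) * (n * (n - 2) / (n * (n - 2) + t)) ^ 2 * auxF (n * (n - 2)) (n / 2) t
      = -(n - 1) * auxF (n * (n - 2)) (n / 2) t / t := by
  have hc : (0:ℝ) < n * (n - 2) := by nlinarith
  have hn2 : n - 2 ≠ 0 := by nlinarith
  have hu : (0:ℝ) < 1 + t / (n * (n - 2)) := by positivity
  have hA : (0:ℝ) < (1 + t / (n * (n - 2))) ^ (n / 2) := Real.rpow_pos_of_pos hu _
  have hspos : 0 < Real.sqrt t := Real.sqrt_pos.mpr ht
  have hct : (0:ℝ) < n * (n - 2) + t := by positivity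
  unfold auxF auxF1 auxF2
  set A := (1 + t / (n * (n - 2))) ^ (n / 2) with hAdef
  have hst : Real.sqrt t ^ 2 = t := Real.sq_sqrt ht.le
  set s := Real.sqrt t with hsdef
  rw [← hst]
  rw [← hst] at hct
  field_simp
  ring



/-- The Laplacian of a function on `EuclideanSpace ℝ (Fin N)`, as the sum of the
second partial derivatives in the coordinate directions. -/
noncomputable def laplacian {N : ℕ} (f : EuclideanSpace ℝ (Fin N) → ℝ)
    (x : EuclideanSpace ℝ (Fin N)) : ℝ :=
  ∑ i : Fin N,
    fderiv ℝ (fun y => fderiv ℝ f y (EuclideanSpace.single i (1 : ℝ))) x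
      (EuclideanSpace.single i (1 : ℝ))

/-- η*(x) = |x|/(1+|x|²/(N(N-2)))^(N/2) satisfies
`-Δη* - V η* = -(N-1) η*/|x|²` on ℝ^N \ {0}, where
V(x) = ((N+2)/(N-2))(N(N-2)/(N(N-2)+|x|²))². -/
theorem stmt2 (N : ℕ) (hN : 3 ≤ N) (V η : EuclideanSpace ℝ (Fin N) → ℝ)
    (hV : ∀ x, V x = (((N : ℝ) + 2) / ((N : ℝ) - 2)) *
        ((N : ℝ) * ((N : ℝ) - 2) / ((N : ℝ) * ((N : ℝ) - 2) + ‖x‖ ^ 2)) ^ 2)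
    (hη : ∀ x, η x = ‖x‖ / (1 + ‖x‖ ^ 2 / ((N : ℝ) * ((N : ℝ) - 2))) ^ ((N : ℝ) / 2)) :
    ∀ x : EuclideanSpace ℝ (Fin N), x ≠ 0 →
      -(laplacian η x) - V x * η x = -((N : ℝ) - 1) * η x / ‖x‖ ^ 2 := by
  intro x hx
  set n : ℝ := (N : ℝ) with hn_def
  have hn : (3:ℝ) ≤ n := by rw [hn_def]; exact_mod_cast hN
  have hc : (0:ℝ) < n * (n - 2) := by nlinarith
  have hxn : ‖x‖ ≠ 0 := norm_ne_zero_iff.mpr hx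
  have ht : (0:ℝ) < ‖x‖ ^ 2 := by positivity
  have hηf : ∀ y : EuclideanSpace ℝ (Fin N),
      η y = auxF (n * (n - 2)) (n / 2) (‖y‖ ^ 2) := by
    intro y
    rw [hη y]
    unfold auxF
    rw [Real.sqrt_sq (norm_nonneg y)]
  have key1 : ∀ y : EuclideanSpace ℝ (Fin N), y ≠ 0 →
      HasFDerivAt η (auxF1 (n * (n - 2)) (n / 2) (‖y‖ ^ 2) • (2 • innerSL ℝ y)) y := by
    intro y hy
    have hty : (0:ℝ) < ‖y‖ ^ 2 := by
      have := norm_ne_zero_iff.mpr hy; positivity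
    have h := (auxF_hasDeriv (p := n / 2) hc hty).comp_hasFDerivAt y
      (hasStrictFDerivAt_norm_sq y).hasFDerivAt
    have heq : η = (auxF (n * (n - 2)) (n / 2)) ∘ (fun y => ‖y‖ ^ 2) := funext hηf
    rw [heq]
    exact h
  have key2 : ∀ y : EuclideanSpace ℝ (Fin N), y ≠ 0 → ∀ i : Fin N,
      fderiv ℝ η y (EuclideanSpace.single i 1)
        = auxF1 (n * (n - 2)) (n / 2) (‖y‖ ^ 2) * (2 * y i) := by
    intro y hy i
    rw [(key1 y hy).fderiv]
    simp [EuclideanSpace.inner_single_right]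
  have hmem : {y : EuclideanSpace ℝ (Fin N) | y ≠ 0} ∈ nhds x := isOpen_ne.mem_nhds hx
  have key3 : ∀ i : Fin N,
      fderiv ℝ (fun y => fderiv ℝ η y (EuclideanSpace.single i (1:ℝ))) x
          (EuclideanSpace.single i (1:ℝ))
        = 2 * auxF1 (n * (n - 2)) (n / 2) (‖x‖ ^ 2)
          + 4 * auxF2 (n * (n - 2)) (n / 2) (‖x‖ ^ 2) * (x i) ^ 2 := by
    intro i
    have hev : (fun y => fderiv ℝ η y (EuclideanSpace.single i (1:ℝ)))
        =ᶠ[nhds x] (fun y => auxF1 (n * (n - 2)) (n / 2) (‖y‖ ^ 2) * (2 * y i)) :=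
      Filter.eventually_of_mem hmem (fun y hy => key2 y hy i)
    rw [hev.fderiv_eq]
    have h1 : HasFDerivAt (fun y : EuclideanSpace ℝ (Fin N) => auxF1 (n * (n - 2)) (n / 2) (‖y‖ ^ 2))
        (auxF2 (n * (n - 2)) (n / 2) (‖x‖ ^ 2) • (2 • innerSL ℝ x)) x :=
      by exact (auxF1_hasDeriv (p := n / 2) hc ht).comp_hasFDerivAt x (hasStrictFDerivAt_norm_sq x).hasFDerivAt
    have hp : HasFDerivAt (fun y : EuclideanSpace ℝ (Fin N) => 2 * y i)
        ((2:ℝ) • (EuclideanSpace.proj i : EuclideanSpace ℝ (Fin N) →L[ℝ] ℝ)) x :=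
      (EuclideanSpace.proj i : EuclideanSpace ℝ (Fin N) →L[ℝ] ℝ).hasFDerivAt.const_mul 2
    have hmul := h1.mul hp
    rw [(show HasFDerivAt (fun y : EuclideanSpace ℝ (Fin N) =>
      auxF1 (n * (n - 2)) (n / 2) (‖y‖ ^ 2) * (2 * y i)) _ x from hmul).fderiv]
    simp [EuclideanSpace.inner_single_right, EuclideanSpace.single_apply]
    ring
  have hsum : laplacian η x
      = 2 * n * auxF1 (n * (n - 2)) (n / 2) (‖x‖ ^ 2)
        + 4 * (‖x‖ ^ 2) * auxF2 (n * (n - 2)) (n / 2) (‖x‖ ^ 2) := by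
    unfold laplacian
    have hnormsq : ∑ i : Fin N, (x i) ^ 2 = ‖x‖ ^ 2 := by
      rw [EuclideanSpace.norm_eq, Real.sq_sqrt (by positivity)]
      simp [Real.norm_eq_abs, sq_abs]
    rw [Finset.sum_congr rfl (fun i _ => key3 i), Finset.sum_add_distrib, Finset.sum_const,
      ← Finset.mul_sum, hnormsq]
    simp only [Finset.card_univ, Fintype.card_fin, nsmul_eq_mul]
    rw [← hn_def]
    ring
  rw [hsum, hV x, hηf x]
  have := aux_identity hn ht
  linarith [this]
end

section
/- Let N ≥ 3, 1 < p < (N+2)/(N-2), k = 2(N-1)/(N-2), 0 < t₁ < t₂, M > 0, and let y : [t₁,t₂] → ℝ be a C² solution of y'' + t^(-k)y^p = 0 with 0 < y ≤ M on (t₁,t₂), y' ≥ 0, y'(t₂)=0, y(t₂)=M, and satisfying the inequality (y'(t) t^(k-1) y(t)^(1-k))' + t^(k-2) y(t)^(-k) t₂^(1-k) M^(p+1) ≤ 0 on (t₁,t₂). Then for every t ∈ (t₁,t₂): y(t)^(2-k) - M^(2-k) ≥ (M^(p+1-k)(k-2)/(k-1)) t^(2-k) g((t/t₂)^(k-1)),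 where g(s) = 1/(k-2) + s - ((k-1)/(k-2)) s^((k-2)/(k-1)). -/
open Set Filter Topology

/-- integrating the differential inequality for the Emden–Fowler
solution yields the pointwise lower bound involving
g(s) = 1/(k-2) + s - ((k-1)/(k-2)) s^((k-2)/(k-1)). -/
theorem stmt11 (N : ℕ) (hN : 3 ≤ N) (p k t₁ t₂ M : ℝ)
    (hk : k = 2 * ((N : ℝ) - 1) / ((N : ℝ) - 2)) (hp : 1 < p)
    (hp2 : p < ((N : ℝ) + 2) / ((N : ℝ) - 2))
    (ht : 0 < t₁) (ht2 : t₁ < t₂) (hM : 0 < M) (y : ℝ → ℝ)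
    (hy : ContDiffOn ℝ 2 y (Set.Icc t₁ t₂))
    (hode : ∀ t ∈ Set.Ioo t₁ t₂, deriv (deriv y) t + t ^ (-k) * (y t) ^ p = 0)
    (hpos : ∀ t ∈ Set.Ioo t₁ t₂, 0 < y t)
    (hbd : ∀ t ∈ Set.Ioo t₁ t₂, y t ≤ M)
    (hmono : ∀ t ∈ Set.Ioo t₁ t₂, 0 ≤ deriv y t)
    (hyt2 : y t₂ = M) (hy't2 : deriv y t₂ = 0)
    (hineq : ∀ t ∈ Set.Ioo t₁ t₂,
      deriv (fun s => deriv y s * s ^ (k - 1) * (y s) ^ (1 - k)) t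
        + t ^ (k - 2) * (y t) ^ (-k) * t₂ ^ (1 - k) * M ^ (p + 1) ≤ 0)
    (g : ℝ → ℝ)
    (hg : ∀ s : ℝ, g s = 1 / (k - 2) + s - ((k - 1) / (k - 2)) * s ^ ((k - 2) / (k - 1))) :
    ∀ t ∈ Set.Ioo t₁ t₂,
      (M ^ (p + 1 - k) * (k - 2) / (k - 1)) * t ^ (2 - k) * g ((t / t₂) ^ (k - 1))
        ≤ (y t) ^ (2 - k) - M ^ (2 - k) := by
  have hN2 : (2:ℝ) < (N:ℝ) := by exact_mod_cast Nat.lt_of_lt_of_le (by norm_num) hN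
  have hN2' : (0:ℝ) < (N:ℝ) - 2 := by linarith
  have hk2 : 2 < k := by
    rw [hk, lt_div_iff₀ hN2']; linarith
  have hk2ne : k - 2 ≠ 0 := by linarith
  have hk1 : (0:ℝ) < k - 1 := by linarith
  have hk1ne : k - 1 ≠ 0 := ne_of_gt hk1
  have ht₂ : 0 < t₂ := lt_trans ht ht2
  set c := M ^ (p + 1 - k) with hc
  have hcpos : 0 < c := Real.rpow_pos_of_pos hM _
  set w := derivWithin y (Set.Icc t₁ t₂) with hw
  have hUD : UniqueDiffOn ℝ (Set.Icc t₁ t₂) := uniqueDiffOn_Icc ht2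
  have hyc : ContinuousOn y (Set.Icc t₁ t₂) := hy.continuousOn
  have hwC : ContDiffOn ℝ 1 w (Set.Icc t₁ t₂) := hy.derivWithin hUD (by norm_num)
  have hwc : ContinuousOn w (Set.Icc t₁ t₂) := hwC.continuousOn
  have hmem : ∀ s ∈ Set.Ioo t₁ t₂, Set.Icc t₁ t₂ ∈ 𝓝 s := fun s hs =>
    Icc_mem_nhds hs.1 hs.2
  have hweq : ∀ s ∈ Set.Ioo t₁ t₂, w s = deriv y s := fun s hs =>
    derivWithin_of_mem_nhds (hmem s hs)
  have hydiff : ∀ s ∈ Set.Ioo t₁ t₂, DifferentiableAt ℝ y s := fun s hs =>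
    ((hy.differentiableOn (by norm_num)) s ⟨hs.1.le, hs.2.le⟩).differentiableAt (hmem s hs)
  have hwdiff : ∀ s ∈ Set.Ioo t₁ t₂, DifferentiableAt ℝ w s := fun s hs =>
    ((hwC.differentiableOn (by norm_num)) s ⟨hs.1.le, hs.2.le⟩).differentiableAt (hmem s hs)
  have hdydiff : ∀ s ∈ Set.Ioo t₁ t₂, DifferentiableAt ℝ (deriv y) s := by
    intro s hs
    have hEq : deriv y =ᶠ[𝓝 s] w := by
      filter_upwards [isOpen_Ioo.mem_nhds hs] with u hu
      exact (hweq u hu).symm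
    exact hEq.differentiableAt_iff.2 (hwdiff s hs)
  -- w t₂ ≥ 0
  have hwt2 : 0 ≤ w t₂ := by
    have hne : (𝓝[Set.Ioo t₁ t₂] t₂).NeBot := by
      rw [← mem_closure_iff_nhdsWithin_neBot, closure_Ioo (ne_of_lt ht2)]
      exact ⟨ht2.le, le_rfl⟩
    have htend : Tendsto w (𝓝[Set.Ioo t₁ t₂] t₂) (𝓝 (w t₂)) := by
      have := (hwc t₂ ⟨ht2.le, le_rfl⟩).tendsto
      exact this.mono_left (nhdsWithin_mono _ Set.Ioo_subset_Icc_self)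
    refine ge_of_tendsto htend ?_
    filter_upwards [self_mem_nhdsWithin] with u hu
    rw [hweq u hu]; exact hmono u hu
  -- step 1
  have key1 : ∀ s ∈ Set.Ioo t₁ t₂,
      c / (k-1) * (s ^ (1-k) - t₂ ^ (1-k)) ≤ deriv y s * (y s) ^ (1-k) := by
    intro s hs
    have hsp : 0 < s := lt_trans ht hs.1
    have hst2 : s < t₂ := hs.2
    set G : ℝ → ℝ := fun r => w r * r ^ (k-1) * y r ^ (1-k) + c * t₂ ^ (1-k) * r ^ (k-1) / (k-1)
      with hG
    have hsubset : Set.Icc s t₂ ⊆ Set.Icc t₁ t₂ := Set.Icc_subset_Icc hs.1.le le_rfl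
    have hrpos : ∀ r ∈ Set.Icc s t₂, 0 < r := fun r hr => lt_of_lt_of_le hsp hr.1
    have hIccpos : ∀ r ∈ Set.Icc s t₂, 0 < y r := by
      intro r hr
      rcases eq_or_lt_of_le hr.2 with h | h
      · rw [h, hyt2]; exact hM
      · exact hpos r ⟨lt_of_lt_of_le hs.1 hr.1, h⟩
    have hGcont : ContinuousOn G (Set.Icc s t₂) := by
      apply ContinuousOn.add
      · exact ((hwc.mono hsubset).mul
          (ContinuousOn.rpow_const continuousOn_id fun r hr => Or.inl (ne_of_gt (hrpos r hr)))).mul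
          ((hyc.mono hsubset).rpow_const fun r hr => Or.inl (ne_of_gt (hIccpos r hr)))
      · exact (continuousOn_const.mul
          (ContinuousOn.rpow_const continuousOn_id fun r hr =>
            Or.inl (ne_of_gt (hrpos r hr)))).div_const _
    have hGkey : ∀ r ∈ Set.Ioo s t₂, DifferentiableAt ℝ G r ∧ deriv G r ≤ 0 := by
      intro r hrI
      have hrIoo : r ∈ Set.Ioo t₁ t₂ := ⟨lt_trans hs.1 hrI.1, hrI.2⟩
      have hrne : r ≠ 0 := ne_of_gt (lt_trans hsp hrI.1)
      have hyne : y r ≠ 0 := ne_of_gt (hpos r hrIoo)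
      have hr1 : DifferentiableAt ℝ (fun u : ℝ => u ^ (k-1)) r :=
        (Real.hasDerivAt_rpow_const (Or.inl hrne)).differentiableAt
      have hFd : DifferentiableAt ℝ (fun u => deriv y u * u ^ (k-1) * y u ^ (1-k)) r :=
        ((hdydiff r hrIoo).mul hr1).mul ((hydiff r hrIoo).rpow_const (Or.inl hyne))
      have hψ : HasDerivAt (fun u : ℝ => c * t₂ ^ (1-k) * u ^ (k-1) / (k-1))
          (c * t₂ ^ (1-k) * ((k-1) * r ^ (k-1-1)) / (k-1)) r :=
        ((Real.hasDerivAt_rpow_const (Or.inl hrne)).const_mul (c * t₂ ^ (1-k))).div_const (k-1)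
      have hGF : G =ᶠ[𝓝 r] fun u =>
          deriv y u * u ^ (k-1) * y u ^ (1-k) + c * t₂ ^ (1-k) * u ^ (k-1) / (k-1) := by
        filter_upwards [isOpen_Ioo.mem_nhds hrIoo] with u hu
        rw [hG]; simp only [hweq u hu]
      have hGd : DifferentiableAt ℝ G r :=
        hGF.differentiableAt_iff.2 (hFd.add hψ.differentiableAt)
      refine ⟨hGd, ?_⟩
      have hdG : deriv G r =
          deriv (fun u => deriv y u * u ^ (k-1) * y u ^ (1-k)) r
            + c * t₂ ^ (1-k) * ((k-1) * r ^ (k-1-1)) / (k-1) := by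
        rw [hGF.deriv_eq, deriv_fun_add hFd hψ.differentiableAt, hψ.deriv]
      have hb := hineq r hrIoo
      have hyk : M ^ (-k) ≤ y r ^ (-k) :=
        Real.rpow_le_rpow_of_nonpos (hpos r hrIoo) (hbd r hrIoo) (by linarith)
      have hcM : M ^ (p+1) * M ^ (-k) = c := by
        rw [hc, ← Real.rpow_add hM]; ring_nf
      have h1 : (0:ℝ) < r ^ (k-2) := Real.rpow_pos_of_pos (lt_trans hsp hrI.1) _
      have h2 : (0:ℝ) < t₂ ^ (1-k) := Real.rpow_pos_of_pos ht₂ _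
      have h3 : (0:ℝ) < M ^ (p+1) := Real.rpow_pos_of_pos hM _
      have h4 : c * t₂ ^ (1-k) * r ^ (k-2) ≤ r ^ (k-2) * y r ^ (-k) * t₂ ^ (1-k) * M ^ (p+1) := by
        have := mul_le_mul_of_nonneg_left hyk (le_of_lt (mul_pos (mul_pos h1 h2) h3))
        calc c * t₂ ^ (1-k) * r ^ (k-2) = r ^ (k-2) * t₂ ^ (1-k) * M ^ (p+1) * M ^ (-k) := by
              rw [← hcM]; ring
          _ ≤ r ^ (k-2) * t₂ ^ (1-k) * M ^ (p+1) * y r ^ (-k) := this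
          _ = r ^ (k-2) * y r ^ (-k) * t₂ ^ (1-k) * M ^ (p+1) := by ring
      have hee : k - 1 - 1 = k - 2 := by ring
      rw [hdG, hee]
      have h5 : c * t₂ ^ (1-k) * ((k-1) * r ^ (k-2)) / (k-1) = c * t₂ ^ (1-k) * r ^ (k-2) := by
        field_simp
      rw [h5]
      linarith
    have hGanti : AntitoneOn G (Set.Icc s t₂) := by
      apply antitoneOn_of_deriv_nonpos (convex_Icc s t₂) hGcont
      · rw [interior_Icc]; exact fun r hr => ((hGkey r hr).1).differentiableWithinAt
      · rw [interior_Icc]; exact fun r hr => (hGkey r hr).2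
    have hGle : G t₂ ≤ G s :=
      hGanti ⟨le_rfl, hst2.le⟩ ⟨hst2.le, le_rfl⟩ hst2.le
    have ht2e : t₂ ^ (1-k) * t₂ ^ (k-1) = 1 := by
      rw [← Real.rpow_add ht₂]; norm_num
    have hGt2 : c / (k-1) ≤ G t₂ := by
      rw [hG]
      simp only [hyt2]
      have h6 : 0 ≤ w t₂ * t₂ ^ (k-1) * M ^ (1-k) := by positivity
      have h7 : c * t₂ ^ (1-k) * t₂ ^ (k-1) / (k-1) = c / (k-1) := by
        rw [mul_assoc, ht2e, mul_one]
      rw [h7]; linarith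
    have hGs : c / (k-1) ≤ w s * s ^ (k-1) * y s ^ (1-k) + c * t₂ ^ (1-k) * s ^ (k-1) / (k-1) :=
      le_trans hGt2 hGle
    have hse : s ^ (k-1) * s ^ (1-k) = 1 := by
      rw [← Real.rpow_add hsp]; norm_num
    have hs1p : (0:ℝ) < s ^ (1-k) := Real.rpow_pos_of_pos hsp _
    have h8 := mul_le_mul_of_nonneg_right hGs hs1p.le
    have hE : (deriv y s * s ^ (k-1) * y s ^ (1-k) + c * t₂ ^ (1-k) * s ^ (k-1) / (k-1))
        * s ^ (1-k) = deriv y s * y s ^ (1-k) + c * t₂ ^ (1-k) / (k-1) := by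
      field_simp
      linear_combination (deriv y s * y s ^ (1-k) * (k-1) + c * t₂ ^ (1-k)) * hse
    rw [hweq s hs] at h8
    rw [hE] at h8
    have h9 : c / (k-1) * s ^ (1-k) ≤ deriv y s * y s ^ (1-k) + c * t₂ ^ (1-k) / (k-1) := h8
    have h10 : c / (k-1) * (s ^ (1-k) - t₂ ^ (1-k))
        = c / (k-1) * s ^ (1-k) - c * t₂ ^ (1-k) / (k-1) := by ring
    linarith
  -- step 2
  intro t htI
  have htp : 0 < t := lt_trans ht htI.1
  have htt2 : t < t₂ := htI.2
  set H : ℝ → ℝ := fun r =>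
    y r ^ (2-k) / (2-k) - c / (k-1) * (r ^ (2-k) / (2-k) - t₂ ^ (1-k) * r) with hH
  have hsubset : Set.Icc t t₂ ⊆ Set.Icc t₁ t₂ := Set.Icc_subset_Icc htI.1.le le_rfl
  have hrpos : ∀ r ∈ Set.Icc t t₂, 0 < r := fun r hr => lt_of_lt_of_le htp hr.1
  have hIccpos : ∀ r ∈ Set.Icc t t₂, 0 < y r := by
    intro r hr
    rcases eq_or_lt_of_le hr.2 with h | h
    · rw [h, hyt2]; exact hM
    · exact hpos r ⟨lt_of_lt_of_le htI.1 hr.1, h⟩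
  have h2kne : (2:ℝ) - k ≠ 0 := by linarith
  have hHcont : ContinuousOn H (Set.Icc t t₂) := by
    apply ContinuousOn.sub
    · exact (((hyc.mono hsubset).rpow_const
        fun r hr => Or.inl (ne_of_gt (hIccpos r hr))).div_const _)
    · exact continuousOn_const.mul
        (((ContinuousOn.rpow_const continuousOn_id fun r hr =>
          Or.inl (ne_of_gt (hrpos r hr))).div_const _).sub
          (continuousOn_const.mul continuousOn_id))
  have hHkey : ∀ r ∈ Set.Ioo t t₂, DifferentiableAt ℝ H r ∧ 0 ≤ deriv H r := by
    intro r hrI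
    have hrIoo : r ∈ Set.Ioo t₁ t₂ := ⟨lt_trans htI.1 hrI.1, hrI.2⟩
    have hrp : 0 < r := lt_trans htp hrI.1
    have hyne : y r ≠ 0 := ne_of_gt (hpos r hrIoo)
    have h1 : HasDerivAt (fun u => y u ^ (2-k)) (deriv y r * (2-k) * y r ^ (2-k-1)) r :=
      (hydiff r hrIoo).hasDerivAt.rpow_const (Or.inl hyne)
    have h2 : HasDerivAt (fun u : ℝ => u ^ (2-k)) ((2-k) * r ^ (2-k-1)) r :=
      Real.hasDerivAt_rpow_const (Or.inl (ne_of_gt hrp))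
    have h3 : HasDerivAt (fun u : ℝ => t₂ ^ (1-k) * u) (t₂ ^ (1-k) * 1) r :=
      (hasDerivAt_id r).const_mul _
    have hHd : HasDerivAt H
        (deriv y r * (2-k) * y r ^ (2-k-1) / (2-k)
          - c / (k-1) * ((2-k) * r ^ (2-k-1) / (2-k) - t₂ ^ (1-k) * 1)) r :=
      (h1.div_const _).sub (((h2.div_const _).sub h3).const_mul _)
    refine ⟨hHd.differentiableAt, ?_⟩
    have he : (2:ℝ) - k - 1 = 1 - k := by ring
    have hdH : deriv H r = deriv y r * y r ^ (1-k) - c / (k-1) * (r ^ (1-k) - t₂ ^ (1-k)) := by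
      rw [hHd.deriv, he]
      field_simp
    rw [hdH]
    have := key1 r hrIoo
    linarith
  have hHmono : MonotoneOn H (Set.Icc t t₂) := by
    apply monotoneOn_of_deriv_nonneg (convex_Icc t t₂) hHcont
    · rw [interior_Icc]; exact fun r hr => ((hHkey r hr).1).differentiableWithinAt
    · rw [interior_Icc]; exact fun r hr => (hHkey r hr).2
  have hHle : H t ≤ H t₂ := hHmono ⟨le_rfl, htt2.le⟩ ⟨htt2.le, le_rfl⟩ htt2.le
  -- final algebra
  set A := y t ^ (2-k) with hA
  set B := M ^ (2-k) with hB
  set T := t ^ (2-k) with hT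
  set Q := t₂ ^ (2-k) with hQ
  set P := t₂ ^ (1-k) * t with hP
  have e1 : t₂ ^ (1-k) * t₂ = Q := by
    rw [hQ]
    calc t₂ ^ (1-k) * t₂ = t₂ ^ (1-k) * t₂ ^ (1:ℝ) := by rw [Real.rpow_one]
      _ = t₂ ^ (1-k+1) := (Real.rpow_add ht₂ _ _).symm
      _ = t₂ ^ (2-k) := by congr 1; ring
  have hHt : H t = A / (2-k) - c / (k-1) * (T / (2-k) - P) := by rw [hH]
  have hHt2 : H t₂ = B / (2-k) - c / (k-1) * (Q / (2-k) - Q) := by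
    rw [hH]; simp only [hyt2, e1, hB, hQ]
  rw [hHt, hHt2] at hHle
  have h7 := mul_le_mul_of_nonpos_left hHle (show 2 - k ≤ 0 by linarith)
  have hx1 : (2-k) * (A / (2-k) - c / (k-1) * (T / (2-k) - P))
      = A - c / (k-1) * (T - (2-k) * P) := by field_simp
  have hx2 : (2-k) * (B / (2-k) - c / (k-1) * (Q / (2-k) - Q))
      = B - c / (k-1) * (Q - (2-k) * Q) := by field_simp
  rw [hx1, hx2] at h7
  -- h7 : B - c/(k-1)*(Q-(2-k)*Q) ≤ A - c/(k-1)*(T-(2-k)*P)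
  have hre : A - c / (k-1) * (T - (2-k) * P) - (B - c / (k-1) * (Q - (2-k) * Q))
      = A - B - c / (k-1) * (T + (k-2) * P - (k-1) * Q) := by ring
  have h9 : c / (k-1) * (T + (k-2) * P - (k-1) * Q) ≤ A - B := by linarith [h7, hre]
  -- identities for g
  set s₀ := (t / t₂) ^ (k-1) with hs₀
  have hdivpos : 0 < t / t₂ := div_pos htp ht₂
  have e2' : T * s₀ = P := by
    rw [hs₀, hT, hP, Real.div_rpow htp.le ht₂.le, div_eq_mul_inv, ← Real.rpow_neg ht₂.le]
    have : t ^ (2-k) * (t ^ (k-1) * t₂ ^ (-(k-1))) = (t ^ (2-k) * t ^ (k-1)) * t₂ ^ (-(k-1)) := by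
      ring
    rw [this, ← Real.rpow_add htp]
    have he1 : (2:ℝ) - k + (k-1) = 1 := by ring
    have he2 : -(k-1) = 1 - k := by ring
    rw [he1, he2, Real.rpow_one]
    ring
  have e3' : T * s₀ ^ ((k-2)/(k-1)) = Q := by
    have hu : s₀ ^ ((k-2)/(k-1)) = (t / t₂) ^ (k-2) := by
      rw [hs₀, ← Real.rpow_mul hdivpos.le]
      congr 1
      field_simp
    rw [hu, hT, hQ, Real.div_rpow htp.le ht₂.le, div_eq_mul_inv, ← Real.rpow_neg ht₂.le]
    have : t ^ (2-k) * (t ^ (k-2) * t₂ ^ (-(k-2))) = (t ^ (2-k) * t ^ (k-2)) * t₂ ^ (-(k-2)) := by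
      ring
    rw [this, ← Real.rpow_add htp]
    have he1 : (2:ℝ) - k + (k-2) = 0 := by ring
    have he2 : -(k-2) = 2 - k := by ring
    rw [he1, he2, Real.rpow_zero, one_mul]
  have hg' : (k-2) * g s₀ = 1 + (k-2) * s₀ - (k-1) * s₀ ^ ((k-2)/(k-1)) := by
    rw [hg]; field_simp
  have hE : (k-2) * (T * g s₀) = T + (k-2) * P - (k-1) * Q := by
    linear_combination T * hg' + (k-2) * e2' - (k-1) * e3'
  calc c * (k-2) / (k-1) * T * g s₀ = c / (k-1) * ((k-2) * (T * g s₀)) := by ring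
    _ = c / (k-1) * (T + (k-2) * P - (k-1) * Q) := by rw [hE]
    _ ≤ A - B := h9
end
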